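/- Suppose f_1,…,f_n : [0,1] → [0,1] are continuous, T_P(t) = (f_1(t),…,f_n(t)) is injective, and the range of T_P is contained in L = ⋃_{i=1}^{n−1} conv{e_i, e_{i+1}}, where the range contains both e_1 and e_n. Then the range of T_P equals L. -/

import Mathlib

/-- If `T_P` is injective, continuous, its range is contained in the path
`L = ⋃_{i=1}^{n−1} conv{e_i, e_{i+1}}`, and the range contains both endpoints
`e_1` and `e_n`, then the range of `T_P` equals `L`. -/
theorem stmt18 (n : ℕ) (hn : 2 ≤ n) (f : Fin n → ℝ → ℝ)
    (hcont : ∀ i, ContinuousOn (f i) (Set.Icc 0 1))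
    (hmap : ∀ i, Set.MapsTo (f i) (Set.Icc 0 1) (Set.Icc 0 1))
    (hinj : Set.InjOn (fun x => (WithLp.toLp 2 (fun i => f i x) : EuclideanSpace ℝ (Fin n)))
      (Set.Icc 0 1))
    (L : Set (EuclideanSpace ℝ (Fin n)))
    (hL : L = ⋃ i : Fin n, ⋃ hi : (i : ℕ) + 1 < n,
      segment ℝ (EuclideanSpace.single i 1)
        (EuclideanSpace.single (⟨(i : ℕ) + 1, hi⟩ : Fin n) 1))
    (hsub : (fun x => (WithLp.toLp 2 (fun i => f i x) : EuclideanSpace ℝ (Fin n))) ''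
      (Set.Icc 0 1) ⊆ L)
    (he1 : EuclideanSpace.single (⟨0, by omega⟩ : Fin n) 1 ∈
      (fun x => (WithLp.toLp 2 (fun i => f i x) : EuclideanSpace ℝ (Fin n))) '' (Set.Icc 0 1))
    (hen : EuclideanSpace.single (⟨n - 1, by omega⟩ : Fin n) 1 ∈
      (fun x => (WithLp.toLp 2 (fun i => f i x) : EuclideanSpace ℝ (Fin n))) '' (Set.Icc 0 1)) :
    (fun x => (WithLp.toLp 2 (fun i => f i x) : EuclideanSpace ℝ (Fin n))) '' (Set.Icc 0 1) = L := by
  set T : ℝ → EuclideanSpace ℝ (Fin n) := fun x => (WithLp.toLp 2 (fun i => f i x) : EuclideanSpace ℝ (Fin n)) with hT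
  set K : Set (EuclideanSpace ℝ (Fin n)) := T '' Set.Icc 0 1 with hK
  -- the "arc length" functional
  set ψ : EuclideanSpace ℝ (Fin n) → ℝ := fun x => ∑ j : Fin n, (j : ℝ) * x j with hψ
  have hψcont : Continuous ψ := by
    apply continuous_finset_sum
    intro j _
    exact continuous_const.mul
      ((continuous_apply j).comp (PiLp.continuous_ofLp 2 _))
  have hψsingle : ∀ i : Fin n, ψ (EuclideanSpace.single i 1) = (i : ℕ) := by
    intro i
    simp [hψ, EuclideanSpace.single_apply, mul_ite]
  have hψlin : ∀ (a b : ℝ) (u v : EuclideanSpace ℝ (Fin n)),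
      ψ (a • u + b • v) = a * ψ u + b * ψ v := by
    intro a b u v
    simp only [hψ, PiLp.add_apply, PiLp.smul_apply, smul_eq_mul, mul_add,
      Finset.sum_add_distrib, Finset.mul_sum]
    congr 1 <;> exact Finset.sum_congr rfl (fun j _ => by ring)
  -- membership in a segment gives the parameter
  have hseg : ∀ (i k : Fin n) (x : EuclideanSpace ℝ (Fin n)),
      x ∈ segment ℝ (EuclideanSpace.single i 1) (EuclideanSpace.single k 1) →
      ∃ t : ℝ, 0 ≤ t ∧ t ≤ 1 ∧
        x = (1 - t) • EuclideanSpace.single i 1 + t • EuclideanSpace.single k 1 := by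
    intro i k x hx
    rw [segment_eq_image] at hx
    obtain ⟨t, ht, rfl⟩ := hx
    exact ⟨t, ht.1, ht.2, rfl⟩
  -- structure of points of L
  have hLmem : ∀ x ∈ L, ∃ (i : Fin n) (hi : (i : ℕ) + 1 < n), ∃ t : ℝ,
      0 ≤ t ∧ t ≤ 1 ∧
      x = (1 - t) • EuclideanSpace.single i 1 +
        t • EuclideanSpace.single (⟨(i : ℕ) + 1, hi⟩ : Fin n) 1 ∧
      ψ x = (i : ℕ) + t := by
    intro x hx
    rw [hL] at hx
    simp only [Set.mem_iUnion] at hx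
    obtain ⟨i, hi, hx⟩ := hx
    obtain ⟨t, ht0, ht1, hxe⟩ := hseg _ _ _ hx
    refine ⟨i, hi, t, ht0, ht1, hxe, ?_⟩
    rw [hxe, hψlin, hψsingle, hψsingle]
    push_cast
    ring
  -- ψ is injective on L
  have hψinj : ∀ x ∈ L, ∀ y ∈ L, ψ x = ψ y → x = y := by
    intro x hx y hy hxy
    obtain ⟨i, hi, s, hs0, hs1, hxe, hxψ⟩ := hLmem x hx
    obtain ⟨k, hk, t, ht0, ht1, hye, hyψ⟩ := hLmem y hy
    rw [hxψ, hyψ] at hxy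
    have hik : (i : ℕ) = k ∨ (i : ℕ) + 1 = k ∨ (k : ℕ) + 1 = i := by
      have h1 : ((i : ℕ) : ℝ) ≤ (k : ℕ) + 1 := by linarith
      have h2 : ((k : ℕ) : ℝ) ≤ (i : ℕ) + 1 := by linarith
      have h1' : (i : ℕ) ≤ (k : ℕ) + 1 := by exact_mod_cast h1
      have h2' : (k : ℕ) ≤ (i : ℕ) + 1 := by exact_mod_cast h2
      omega
    rcases hik with h | h | h
    · have hik' : i = k := Fin.ext h
      subst hik'
      have hst : s = t := by
        have : ((i : ℕ) : ℝ) + s = (i : ℕ) + t := hxy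
        linarith
      rw [hxe, hye, hst]
    · -- k = i + 1 : then s = 1, t = 0
      have hcast : ((i : ℕ) : ℝ) + 1 = (k : ℕ) := by exact_mod_cast congrArg (Nat.cast : ℕ → ℝ) h
      have hs : s = 1 := by linarith
      have ht : t = 0 := by linarith
      have hfin : (⟨(i : ℕ) + 1, hi⟩ : Fin n) = k := Fin.ext h
      rw [hxe, hye, hs, ht, hfin]
      simp
    · -- i = k + 1 : then t = 1, s = 0
      have hcast : ((k : ℕ) : ℝ) + 1 = (i : ℕ) := by exact_mod_cast congrArg (Nat.cast : ℕ → ℝ) h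
      have hs : s = 0 := by linarith
      have ht : t = 1 := by linarith
      have hfin : (⟨(k : ℕ) + 1, hk⟩ : Fin n) = i := Fin.ext h
      rw [hxe, hye, hs, ht, hfin]
      simp
  -- K is a connected set under ψ containing 0 and n-1
  have hTcont : ContinuousOn T (Set.Icc 0 1) := by
    have h1 : ContinuousOn (fun x => (fun i => f i x) : ℝ → ∀ _ : Fin n, ℝ)
        (Set.Icc 0 1) := continuousOn_pi.2 hcont
    exact (PiLp.continuous_toLp 2 _).comp_continuousOn h1
  have hconn : IsPreconnected ((ψ ∘ T) '' Set.Icc 0 1) :=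
    (isPreconnected_Icc).image _ (hψcont.comp_continuousOn hTcont)
  have himg : (ψ ∘ T) '' Set.Icc 0 1 = ψ '' K := by
    rw [hK, Set.image_comp]
  have h0mem : (0 : ℝ) ∈ ψ '' K := by
    refine ⟨_, he1, ?_⟩
    rw [hψsingle]
    norm_num
  have hnmem : ((n : ℝ) - 1) ∈ ψ '' K := by
    refine ⟨_, hen, ?_⟩
    rw [hψsingle]
    have : ((n - 1 : ℕ) : ℝ) = (n : ℝ) - 1 := by
      have : 1 ≤ n := by omega
      push_cast [this]
      ring
    simpa using this
  have hIcc : Set.Icc (0 : ℝ) ((n : ℝ) - 1) ⊆ ψ '' K := by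
    rw [← himg] at h0mem hnmem ⊢
    exact hconn.Icc_subset h0mem hnmem
  -- conclude
  apply Set.Subset.antisymm hsub
  intro x hx
  obtain ⟨i, hi, t, ht0, ht1, hxe, hxψ⟩ := hLmem x hx
  have hmemIcc : ψ x ∈ Set.Icc (0 : ℝ) ((n : ℝ) - 1) := by
    rw [hxψ]
    constructor
    · positivity
    · have : (i : ℕ) + 1 ≤ n - 1 := by omega
      have h2 : ((i : ℕ) : ℝ) ≤ (n : ℝ) - 2 := by
        have : (i : ℕ) ≤ n - 2 := by omega
        have h3 : ((i : ℕ) : ℝ) ≤ ((n - 2 : ℕ) : ℝ) := by exact_mod_cast this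
        have h4 : ((n - 2 : ℕ) : ℝ) = (n : ℝ) - 2 := by
          have : 2 ≤ n := hn
          push_cast [this]
          ring
        linarith
      linarith
  obtain ⟨y, hyK, hyψ⟩ := hIcc hmemIcc
  have hyL : y ∈ L := hsub hyK
  rwa [← hψinj y hyL x hx hyψ]
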